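/- For each spike vertex s_i of the clause gadget 𝒢_k, there exists a maximum independent set I of 𝒢_k such that s_i is the only spike vertex contained in I. -/

import Mathlib

open SimpleGraph

/-- The maximum size of an independent set of `G` contained in the vertex set `A`
(i.e. the independence number of the induced subgraph `G[A]`). -/
noncomputable def alphaOn {V : Type*} [Fintype V] (G : SimpleGraph V) (A : Set V) : ℕ :=
  sSup {n | ∃ s : Finset V, ↑s ⊆ A ∧ (↑s : Set V).Pairwise (fun a b => ¬ G.Adj a b) ∧ s.card = n}

/-- The open neighborhood of a set of vertices. -/
def nbhd {V : Type*} (G : SimpleGraph V) (S : Set V) : Set V :=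
  {v | v ∉ S ∧ ∃ u ∈ S, G.Adj u v}

/-- `v` is α-critical in the induced subgraph `G[A]`. -/
def critOn {V : Type*} [Fintype V] (G : SimpleGraph V) (A : Set V) (v : V) : Prop :=
  alphaOn G A = 1 + alphaOn G (A \ {v})

/-- For a tree `T` rooted at `r`, the vertex set of the subtree rooted at `a`:
those vertices reachable from `a` without passing through `r`. -/
def descend {V : Type*} (T : SimpleGraph V) (r a : V) : Set V :=
  {v | ∃ p : T.Walk a v, r ∉ p.support}

/-- The connected component of `v₀` in `G - X`: vertices reachable from `v₀` avoiding `X`. -/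
def avoidComp {V : Type*} (G : SimpleGraph V) (X : Set V) (v₀ : V) : Set V :=
  {v | ∃ p : G.Walk v₀ v, ∀ x ∈ p.support, x ∉ X}

/-- Vertices of the clause gadget `𝒢 k`: `L j` is the left vertex `l_{j+1}` (for `j : Fin (k+1)`,
giving `l_1, …, l_{k+1}`), `R j` is the right vertex `r_j` (giving `r_0, …, r_k`), and
`S j` is the spike vertex `s_{j+1}` (giving `s_1, …, s_k`). -/
inductive GadgetV (k : ℕ) : Type
  | L : Fin (k + 1) → GadgetV k
  | R : Fin (k + 1) → GadgetV k
  | S : Fin k → GadgetV k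
  deriving DecidableEq, Fintype

/-- The edges of the clause gadget: the connecting edges `r_j l_{j+1}` and, for each
triangle `T_{m+1}` (with `m : Fin k`), the triangle edges `l_{m+1} r_{m+1}`,
`l_{m+1} s_{m+1}` and `r_{m+1} s_{m+1}`. -/
def gadgetRel (k : ℕ) : GadgetV k → GadgetV k → Prop := fun x y =>
  (∃ j : Fin (k + 1), x = .R j ∧ y = .L j) ∨
  (∃ m : Fin k,
    (x = .L m.castSucc ∧ y = .R m.succ) ∨
    (x = .L m.castSucc ∧ y = .S m) ∨
    (x = .R m.succ ∧ y = .S m))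

/-- The clause gadget `𝒢 k`. -/
def gadget (k : ℕ) : SimpleGraph (GadgetV k) := SimpleGraph.fromRel (gadgetRel k)

/-- The explicit independent set: `R 0, …, R m, S m, L (m+1), …, L k`. -/
private def gg (k : ℕ) (m : Fin k) (j : Fin (k + 2)) : GadgetV k :=
  if _ : j.val ≤ m.val then .R ⟨j.val, by have := m.isLt; omega⟩
  else if _ : j.val ≤ k then .L ⟨j.val, by omega⟩
  else .S m

private lemma gg_inj (k : ℕ) (m : Fin k) : Function.Injective (gg k m) := by
  intro j j' h
  unfold gg at h
  split_ifs at h <;> simp_all [Fin.ext_iff] <;> omega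

private lemma gg_norel (k : ℕ) (m : Fin k) (j j' : Fin (k + 2)) :
    ¬ gadgetRel k (gg k m j) (gg k m j') := by
  have hm := m.isLt
  rintro (⟨i, h1, h2⟩ | ⟨i, (⟨h1, h2⟩ | ⟨h1, h2⟩ | ⟨h1, h2⟩)⟩) <;>
    unfold gg at h1 h2 <;>
    split_ifs at h1 h2 <;>
    simp_all [Fin.ext_iff, Fin.castSucc, Fin.succ, Fin.castAdd, Fin.castLE] <;>
    omega

/-- Clique coloring map proving the upper bound. -/
private def ff (k : ℕ) : GadgetV k → ℕ
  | .L j => if j.val = k then k + 1 else j.val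
  | .R j => if j.val = 0 then k else j.val - 1
  | .S i => i.val

private lemma ff_adj (k : ℕ) (a b : GadgetV k) (hne : a ≠ b) (hf : ff k a = ff k b) :
    (gadget k).Adj a b := by
  rw [gadget, fromRel_adj]
  refine ⟨hne, ?_⟩
  cases a with
  | L j =>
    cases b with
    | L j' =>
      exfalso; apply hne
      have hj := j.isLt; have hj' := j'.isLt
      simp only [ff] at hf; split_ifs at hf <;> simp_all [Fin.ext_iff] <;> omega
    | R j' =>
      have hj := j.isLt; have hj' := j'.isLt
      simp only [ff] at hf; split_ifs at hf with h1 h2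
      · omega
      · omega
      · omega
      · -- j.val = j'.val - 1, so j' = j + 1 : triangle edge l r
        exact Or.inl (Or.inr ⟨⟨j.val, by omega⟩, Or.inl
          ⟨by simp [Fin.ext_iff, Fin.castSucc, Fin.castAdd, Fin.castLE],
           by simp [Fin.ext_iff, Fin.succ]; omega⟩⟩)
    | S i' =>
      have hj := j.isLt; have hi' := i'.isLt
      simp only [ff] at hf; split_ifs at hf with h1
      · omega
      · exact Or.inl (Or.inr ⟨i', Or.inr (Or.inl
          ⟨by simp [Fin.ext_iff, Fin.castSucc, Fin.castAdd, Fin.castLE]; omega, rfl⟩)⟩)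
  | R j =>
    cases b with
    | L j' =>
      have hj := j.isLt; have hj' := j'.isLt
      simp only [ff] at hf; split_ifs at hf with h1 h2
      · omega
      · omega
      · omega
      · exact Or.inr (Or.inr ⟨⟨j'.val, by omega⟩, Or.inl
          ⟨by simp [Fin.ext_iff, Fin.castSucc, Fin.castAdd, Fin.castLE],
           by simp [Fin.ext_iff, Fin.succ]; omega⟩⟩)
    | R j' =>
      exfalso; apply hne
      have hj := j.isLt; have hj' := j'.isLt
      simp only [ff] at hf; split_ifs at hf <;> simp only [GadgetV.R.injEq, Fin.ext_iff] <;> omega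
    | S i' =>
      have hj := j.isLt; have hi' := i'.isLt
      simp only [ff] at hf; split_ifs at hf with h1
      · omega
      · exact Or.inl (Or.inr ⟨i', Or.inr (Or.inr
          ⟨by simp [Fin.ext_iff, Fin.succ]; omega, rfl⟩)⟩)
  | S i =>
    cases b with
    | L j' =>
      have hi := i.isLt; have hj' := j'.isLt
      simp only [ff] at hf; split_ifs at hf with h1
      · omega
      · exact Or.inr (Or.inr ⟨i, Or.inr (Or.inl
          ⟨by simp [Fin.ext_iff, Fin.castSucc, Fin.castAdd, Fin.castLE]; omega, rfl⟩)⟩)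
    | R j' =>
      have hi := i.isLt; have hj' := j'.isLt
      simp only [ff] at hf; split_ifs at hf with h1
      · omega
      · exact Or.inr (Or.inr ⟨i, Or.inr (Or.inr
          ⟨by simp [Fin.ext_iff, Fin.succ]; omega, rfl⟩)⟩)
    | S i' =>
      exfalso; apply hne
      simp only [ff] at hf; simp_all [Fin.ext_iff]

private lemma ff_lt (k : ℕ) (a : GadgetV k) : ff k a < k + 2 := by
  cases a with
  | L j => have := j.isLt; simp only [ff]; split_ifs <;> omega
  | R j => have := j.isLt; simp only [ff]; split_ifs <;> omega
  | S i => have := i.isLt; simp only [ff]; omega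

private lemma indep_card_le (k : ℕ) (s : Finset (GadgetV k))
    (hs : (↑s : Set (GadgetV k)).Pairwise (fun a b => ¬ (gadget k).Adj a b)) :
    s.card ≤ k + 2 := by
  have hinj : Set.InjOn (ff k) ↑s := by
    intro a ha b hb hab
    by_contra hne
    exact hs ha hb hne (ff_adj k a b hne hab)
  calc s.card = (s.image (ff k)).card := (Finset.card_image_of_injOn hinj).symm
    _ ≤ (Finset.range (k + 2)).card := by
        apply Finset.card_le_card
        intro n hn
        simp only [Finset.mem_image] at hn
        obtain ⟨a, _, rfl⟩ := hn
        exact Finset.mem_range.mpr (ff_lt k a)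
    _ = k + 2 := Finset.card_range _

theorem stmt12 (k : ℕ) (hk : 1 ≤ k) (m : Fin k) :
    ∃ I : Finset (GadgetV k),
      (↑I : Set (GadgetV k)).Pairwise (fun a b => ¬ (gadget k).Adj a b) ∧
      I.card = alphaOn (gadget k) Set.univ ∧
      GadgetV.S m ∈ I ∧ ∀ m' : Fin k, GadgetV.S m' ∈ I → m' = m := by
  classical
  set I : Finset (GadgetV k) := Finset.image (gg k m) Finset.univ with hI
  have hpair : (↑I : Set (GadgetV k)).Pairwise (fun a b => ¬ (gadget k).Adj a b) := by
    intro a ha b hb hne hadj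
    simp only [hI, Finset.coe_image, Finset.coe_univ, Set.image_univ, Set.mem_range] at ha hb
    obtain ⟨j, rfl⟩ := ha
    obtain ⟨j', rfl⟩ := hb
    rw [gadget, fromRel_adj] at hadj
    rcases hadj.2 with h | h
    · exact gg_norel k m j j' h
    · exact gg_norel k m j' j h
  have hcard : I.card = k + 2 := by
    rw [hI, Finset.card_image_of_injective _ (gg_inj k m), Finset.card_univ, Fintype.card_fin]
  have halpha : alphaOn (gadget k) Set.univ = k + 2 := by
    apply le_antisymm
    · apply csSup_le
      · exact ⟨k + 2, I, by simp, hpair, hcard⟩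
      · rintro n ⟨s, -, hp, rfl⟩
        exact indep_card_le k s hp
    · apply le_csSup
      · exact ⟨k + 2, by rintro n ⟨s, -, hp, rfl⟩; exact indep_card_le k s hp⟩
      · exact ⟨I, by simp, hpair, hcard⟩
  have hmem : GadgetV.S m ∈ I := by
    have hm := m.isLt
    refine Finset.mem_image.mpr ⟨⟨k + 1, by omega⟩, Finset.mem_univ _, ?_⟩
    unfold gg
    split_ifs <;> simp_all <;> omega
  refine ⟨I, hpair, by rw [hcard, halpha], hmem, ?_⟩
  intro m' hm'
  obtain ⟨j, -, hj⟩ := Finset.mem_image.mp hm'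
  unfold gg at hj
  split_ifs at hj <;> simp_all
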